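/- Let f ≥ 2 be an even integer and N := f/2 + 1. Define κ : ℝ → ℝ by κ(t) = (sin(Nπt)/(N·sin(πt)))⁴ for t ∉ ℤ and κ(t) = 1 for t ∈ ℤ (so κ = |N^{-1} Σ_{k=0}^{N−1} e^{2πikt}|⁴ is a trigonometric polynomial, in particular smooth). Then the second derivative of κ at 0 equals κ''(0) = −π² f (f+4)/3. -/

import Mathlib

open Classical

/-- The univariate Fejér-type kernel `κ(t) = (sin(Nπt)/(N sin(πt)))⁴` with `N = f/2 + 1`,
extended by `1` at the integers (where the formula degenerates); `κ` agrees with the smooth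
trigonometric polynomial `|N⁻¹ ∑_{k<N} e^{2πikt}|⁴`. -/
noncomputable def fejerKappa (f : ℕ) : ℝ → ℝ := fun t =>
  if ∃ n : ℤ, t = (n : ℝ) then 1
  else (Real.sin (((f : ℝ) / 2 + 1) * Real.pi * t) /
      (((f : ℝ) / 2 + 1) * Real.sin (Real.pi * t))) ^ 4

private lemma auxTel (N : ℕ) (x : ℝ) :
    Real.sin x * ∑ k ∈ Finset.range N, Real.cos ((2 * (k : ℝ) + 1 - N) * x)
      = Real.sin ((N : ℝ) * x) := by
  have h := Finset.sum_range_sub (fun k => Real.sin ((2 * (k : ℝ) - N) * x)) N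
  have h2 : ∀ k ∈ Finset.range N,
      Real.sin ((2 * ((k : ℝ) + 1) - N) * x) - Real.sin ((2 * (k : ℝ) - N) * x)
        = 2 * Real.sin x * Real.cos ((2 * (k : ℝ) + 1 - N) * x) := by
    intro k _
    rw [Real.sin_sub_sin]
    have e1 : ((2 * ((k : ℝ) + 1) - N) * x - (2 * (k : ℝ) - N) * x) / 2 = x := by ring
    have e2 : ((2 * ((k : ℝ) + 1) - N) * x + (2 * (k : ℝ) - N) * x) / 2
        = (2 * (k : ℝ) + 1 - N) * x := by ring
    rw [e1, e2]
  push_cast at h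
  rw [Finset.sum_congr rfl h2, ← Finset.mul_sum] at h
  have h0 : Real.sin ((2 * (0 : ℝ) - N) * x) = -Real.sin ((N : ℝ) * x) := by
    rw [show (2 * (0 : ℝ) - N) * x = -((N : ℝ) * x) by ring, Real.sin_neg]
  have hN : Real.sin ((2 * (N : ℝ) - N) * x) = Real.sin ((N : ℝ) * x) := by
    rw [show (2 * (N : ℝ) - N) * x = (N : ℝ) * x by ring]
  rw [hN, h0] at h
  linarith

private lemma sumIdR (n : ℕ) : ∑ k ∈ Finset.range n, (k : ℝ) = n * (n - 1) / 2 := by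
  induction n with
  | zero => simp
  | succ n ih => rw [Finset.sum_range_succ, ih]; push_cast; ring

private lemma sumSqR (n : ℕ) :
    ∑ k ∈ Finset.range n, (k : ℝ) ^ 2 = n * (n - 1) * (2 * n - 1) / 6 := by
  induction n with
  | zero => simp
  | succ n ih => rw [Finset.sum_range_succ, ih]; push_cast; ring

private lemma sumCoef (N : ℕ) :
    ∑ k ∈ Finset.range N, (2 * (k : ℝ) + 1 - N) ^ 2 = N * ((N : ℝ) ^ 2 - 1) / 3 := by
  have h : ∀ k ∈ Finset.range N, (2 * (k : ℝ) + 1 - N) ^ 2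
      = 4 * (k : ℝ) ^ 2 + (4 * (1 - (N : ℝ))) * k + (1 - (N : ℝ)) ^ 2 := by
    intro k _; ring
  rw [Finset.sum_congr rfl h, Finset.sum_add_distrib, Finset.sum_add_distrib,
    ← Finset.mul_sum, ← Finset.mul_sum, sumIdR, sumSqR, Finset.sum_const,
    Finset.card_range, nsmul_eq_mul]
  ring

/-- the second derivative of the Fejér-type kernel at `0` is
`κ''(0) = −π² f (f+4)/3`. -/
theorem statement7 (f : ℕ) (hfeven : Even f) (hf2 : 2 ≤ f) :
    deriv (deriv (fejerKappa f)) 0 = -(Real.pi ^ 2 * f * (f + 4) / 3) := by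
  obtain ⟨m, rfl⟩ := hfeven
  set N : ℕ := m + 1 with hNdef
  have hNR : ((m : ℝ) + (m : ℝ)) / 2 + 1 = (N : ℝ) := by push_cast [hNdef]; ring
  have hNpos : (0 : ℝ) < (N : ℝ) := by positivity
  have hNval : (N : ℝ) = (m : ℝ) + 1 := by push_cast [hNdef]; ring
  have hNne : (N : ℝ) ≠ 0 := ne_of_gt hNpos
  -- the coefficients
  set c : ℕ → ℝ := fun k => (2 * (k : ℝ) + 1 - N) * Real.pi with hc
  set S : ℝ → ℝ := fun t => ∑ k ∈ Finset.range N, Real.cos (c k * t) with hS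
  set S1 : ℝ → ℝ := fun t => ∑ k ∈ Finset.range N, -(Real.sin (c k * t)) * c k with hS1
  set S2 : ℝ → ℝ := fun t => ∑ k ∈ Finset.range N, -(Real.cos (c k * t)) * c k * c k with hS2
  -- fejerKappa = smooth function
  have hEq : fejerKappa (m + m) = fun t => ((N : ℝ)⁻¹ * S t) ^ 4 := by
    funext t
    unfold fejerKappa
    by_cases ht : ∃ n : ℤ, t = (n : ℝ)
    · rw [if_pos ht]
      obtain ⟨n, rfl⟩ := ht
      have hterm : ∀ k ∈ Finset.range N, Real.cos (c k * (n : ℝ))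
          = Real.cos ((m : ℝ) * n * Real.pi) := by
        intro k _
        have : c k * (n : ℝ) = -((m : ℝ) * n * Real.pi) + (k * n : ℤ) * (2 * Real.pi) := by
          simp only [hc]; push_cast [hNdef]; ring
        rw [this, Real.cos_add_int_mul_two_pi, Real.cos_neg]
      have hSn : S (n : ℝ) = N * Real.cos ((m : ℝ) * n * Real.pi) := by
        rw [show S (n : ℝ) = ∑ k ∈ Finset.range N, Real.cos (c k * (n : ℝ)) from rfl,
          Finset.sum_congr rfl hterm, Finset.sum_const, Finset.card_range, nsmul_eq_mul]
      have hsin0 : Real.sin ((m : ℝ) * n * Real.pi) = 0 := by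
        have : (m : ℝ) * n * Real.pi = ((m * n : ℤ) : ℝ) * Real.pi := by push_cast; ring
        rw [this]; exact Real.sin_int_mul_pi _
      have hcos2 : Real.cos ((m : ℝ) * n * Real.pi) ^ 2 = 1 := by
        have := Real.sin_sq_add_cos_sq ((m : ℝ) * n * Real.pi)
        rw [hsin0] at this; nlinarith
      rw [hSn]
      rw [show (N : ℝ)⁻¹ * ((N : ℝ) * Real.cos ((m : ℝ) * n * Real.pi))
          = Real.cos ((m : ℝ) * n * Real.pi) by field_simp]
      nlinarith [hcos2]
    · rw [if_neg ht]
      have hsin : Real.sin (Real.pi * t) ≠ 0 := by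
        intro h
        rcases Real.sin_eq_zero_iff.1 h with ⟨n, hn⟩
        refine ht ⟨n, ?_⟩
        have := mul_left_cancel₀ Real.pi_ne_zero
          (show Real.pi * t = Real.pi * (n : ℝ) by rw [← hn]; ring)
        linarith
      have htel := auxTel N (Real.pi * t)
      have hSt : Real.sin (Real.pi * t) * S t = Real.sin ((N : ℝ) * (Real.pi * t)) := by
        rw [show S t = ∑ k ∈ Finset.range N, Real.cos (c k * t) from rfl, ← htel]
        congr 1
        refine Finset.sum_congr rfl fun k _ => ?_
        congr 1; simp only [hc]; ring
      push_cast
      rw [hNR, show (N : ℝ) * Real.pi * t = (N : ℝ) * (Real.pi * t) by ring, ← hSt]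
      rw [show Real.sin (Real.pi * t) * S t / ((N : ℝ) * Real.sin (Real.pi * t))
          = (N : ℝ)⁻¹ * S t by field_simp]
  rw [hEq]
  -- derivatives
  have hder : ∀ (k : ℕ) (t : ℝ),
      HasDerivAt (fun t => Real.cos (c k * t)) (-(Real.sin (c k * t)) * c k) t := by
    intro k t
    simpa using ((hasDerivAt_id t).const_mul (c k)).cos
  have hder1 : ∀ (k : ℕ) (t : ℝ),
      HasDerivAt (fun t => -(Real.sin (c k * t)) * c k)
        (-(Real.cos (c k * t)) * c k * c k) t := by
    intro k t
    have := (((hasDerivAt_id t).const_mul (c k)).sin.neg).mul_const (c k)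
    simpa using this
  have hSder : ∀ t, HasDerivAt S (S1 t) t := fun t =>
    HasDerivAt.fun_sum fun k _ => hder k t
  have hS1der : ∀ t, HasDerivAt S1 (S2 t) t := fun t =>
    HasDerivAt.fun_sum fun k _ => hder1 k t
  have hF : ∀ t, HasDerivAt (fun t => ((N : ℝ)⁻¹ * S t) ^ 4)
      ((4 : ℕ) * ((N : ℝ)⁻¹ * S t) ^ 3 * ((N : ℝ)⁻¹ * S1 t)) t := by
    intro t
    exact ((hSder t).const_mul _).pow 4
  have hderivF : deriv (fun t => ((N : ℝ)⁻¹ * S t) ^ 4)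
      = fun t => (4 : ℕ) * ((N : ℝ)⁻¹ * S t) ^ 3 * ((N : ℝ)⁻¹ * S1 t) := by
    funext t; exact (hF t).deriv
  rw [hderivF]
  have hG : HasDerivAt (fun t => (4 : ℕ) * ((N : ℝ)⁻¹ * S t) ^ 3 * ((N : ℝ)⁻¹ * S1 t))
      (((4 : ℕ) * ((3 : ℕ) * ((N : ℝ)⁻¹ * S 0) ^ 2 * ((N : ℝ)⁻¹ * S1 0))) * ((N : ℝ)⁻¹ * S1 0)
        + ((4 : ℕ) * ((N : ℝ)⁻¹ * S 0) ^ 3) * ((N : ℝ)⁻¹ * S2 0)) 0 := by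
    exact ((((hSder 0).const_mul _).pow 3).const_mul ((4 : ℕ) : ℝ)).mul
      ((hS1der 0).const_mul _)
  rw [hG.deriv]
  -- evaluate at 0
  have hS0 : S 0 = N := by
    simp [hS]
  have hS10 : S1 0 = 0 := by
    simp [hS1]
  have hS20 : S2 0 = -(Real.pi ^ 2 * (N * ((N : ℝ) ^ 2 - 1) / 3)) := by
    have h1 : S2 0 = -∑ k ∈ Finset.range N, (2 * (k : ℝ) + 1 - N) ^ 2 * Real.pi ^ 2 := by
      rw [show S2 0 = ∑ k ∈ Finset.range N, -(Real.cos (c k * 0)) * c k * c k from rfl,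
        ← Finset.sum_neg_distrib]
      refine Finset.sum_congr rfl fun k _ => ?_
      simp only [hc, mul_zero, Real.cos_zero]; ring
    rw [h1, ← Finset.sum_mul, sumCoef]
    ring
  rw [hS0, hS10, hS20]
  push_cast
  field_simp [hNval]
  rw [hNval]; ring
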